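/- Let (M,d) be a metric space, E : M → ℝ, and x₀ ∈ M. For 0 < s < t, let u_s minimize v ↦ d²(v, x₀)/(2s) + E(v) over M and let u_t minimize v ↦ d²(v, x₀)/(2t) + E(v) over M. Then d(u_s, x₀) ≤ d(u_t, x₀). In particular, for any choice of minimizers, the function s ↦ d(u_s, x₀) is monotone nondecreasing on (0,∞). -/
import Mathlib

open MeasureTheory

theorem stmt_5 {M : Type*} [MetricSpace M] (E : M → ℝ) (x₀ : M)
    (s t : ℝ) (hs : 0 < s) (hst : s < t) (us ut : M)
    (hmins : ∀ v : M, dist us x₀ ^ 2 / (2 * s) + E us ≤ dist v x₀ ^ 2 / (2 * s) + E v)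
    (hmint : ∀ v : M, dist ut x₀ ^ 2 / (2 * t) + E ut ≤ dist v x₀ ^ 2 / (2 * t) + E v) :
    dist us x₀ ≤ dist ut x₀ := by
  have h1 := hmins ut
  have h2 := hmint us
  have ht : 0 < t := hs.trans hst
  have ha : (0:ℝ) ≤ dist us x₀ := dist_nonneg
  have hb : (0:ℝ) ≤ dist ut x₀ := dist_nonneg
  have hsq : dist us x₀ ^ 2 ≤ dist ut x₀ ^ 2 := by
    have h1' : dist us x₀ ^ 2 - dist ut x₀ ^ 2 ≤ (E ut - E us) * (2 * s) := by
      have := sub_le_sub h1 (le_refl (E us))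
      have h2s : (0:ℝ) < 2 * s := by linarith
      rw [div_add' _ _ _ (ne_of_gt h2s), div_add' _ _ _ (ne_of_gt h2s), div_le_div_iff₀ h2s h2s] at h1
      nlinarith
    have h2' : (E ut - E us) * (2 * t) ≤ dist us x₀ ^ 2 - dist ut x₀ ^ 2 := by
      have h2t : (0:ℝ) < 2 * t := by linarith
      rw [div_add' _ _ _ (ne_of_gt h2t), div_add' _ _ _ (ne_of_gt h2t), div_le_div_iff₀ h2t h2t] at h2
      nlinarith
    nlinarith
  nlinarith
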